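/- For a probability measure μ on a measurable space X and measurable functions f, g : X → ℝ with finite p-th absolute moments, the Tukey 'norm' ‖f‖_{T_p(μ)} := (∫ T_p(f) dμ)^{1/p} satisfies the triangle inequality ‖f+g‖_{T_p(μ)} ≤ ‖f‖_{T_p(μ)} + ‖g‖_{T_p(μ)}. -/

import Mathlib

open MeasureTheory
open scoped ENNReal

/-- The p-Tukey loss with threshold τ. -/
noncomputable def tukey (p τ x : ℝ) : ℝ := if |x| ≤ τ then |x| ^ p else τ ^ p

lemma tukey_eq_min_rpow (p τ x : ℝ) (hτ : 0 ≤ τ) :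
    tukey p τ x = (min |x| τ) ^ p := by
  unfold tukey
  by_cases h : |x| ≤ τ
  · rw [if_pos h, min_eq_left h]
  · rw [if_neg h, min_eq_right (le_of_not_ge h)]

lemma min_abs_add_le (τ a b : ℝ) (hτ : 0 ≤ τ) :
    min |a + b| τ ≤ min |a| τ + min |b| τ := by
  rcases le_or_gt |a| τ with ha | ha
  · rcases le_or_gt |b| τ with hb | hb
    · rw [min_eq_left ha, min_eq_left hb]
      exact le_trans (min_le_left _ _) (abs_add_le a b)
    · rw [min_eq_right hb.le]
      have : min |a + b| τ ≤ τ := min_le_right _ _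
      have h2 : 0 ≤ min |a| τ := le_min (abs_nonneg _) hτ
      linarith
  · rw [min_eq_right ha.le]
    have : min |a + b| τ ≤ τ := min_le_right _ _
    have h2 : 0 ≤ min |b| τ := le_min (abs_nonneg _) hτ
    linarith

/-- Triangle inequality for the Tukey `norm`. -/
theorem tukey_norm_triangle {X : Type*} [MeasurableSpace X]
    (μ : Measure X) [IsProbabilityMeasure μ]
    (p τ : ℝ) (hp : 1 ≤ p) (hτ : 0 ≤ τ) (f g : X → ℝ)
    (hf : Measurable f) (hg : Measurable g)
    (hfp : Integrable (fun x => |f x| ^ p) μ)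
    (hgp : Integrable (fun x => |g x| ^ p) μ) :
    (∫ x, tukey p τ (f x + g x) ∂μ) ^ (1 / p) ≤
      (∫ x, tukey p τ (f x) ∂μ) ^ (1 / p) + (∫ x, tukey p τ (g x) ∂μ) ^ (1 / p) := by
  have hp0 : 0 ≤ p := le_trans zero_le_one hp
  -- general facts for a measurable function h
  have main : ∀ h : X → ℝ, Measurable h →
      ENNReal.ofReal (∫ x, tukey p τ (h x) ∂μ) =
        ∫⁻ x, (ENNReal.ofReal (min |h x| τ)) ^ p ∂μ := by
    intro h hh
    have hmeas : Measurable fun x => tukey p τ (h x) := by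
      have : (fun x => tukey p τ (h x)) = fun x => (min |h x| τ) ^ p := by
        funext x; exact tukey_eq_min_rpow p τ (h x) hτ
      rw [this]
      fun_prop
    have hb : ∀ x, tukey p τ (h x) ∈ Set.Icc 0 (τ ^ p) := by
      intro x
      rw [tukey_eq_min_rpow p τ (h x) hτ]
      constructor
      · exact Real.rpow_nonneg (le_min (abs_nonneg _) hτ) p
      · exact Real.rpow_le_rpow (le_min (abs_nonneg _) hτ) (min_le_right _ _) hp0
    have hint : Integrable (fun x => tukey p τ (h x)) μ := by
      refine Integrable.mono' (integrable_const (τ ^ p)) hmeas.aestronglyMeasurable ?_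
      filter_upwards with x
      rw [Real.norm_eq_abs, abs_of_nonneg (hb x).1]; exact (hb x).2
    rw [ofReal_integral_eq_lintegral_ofReal hint (Filter.Eventually.of_forall fun x => (hb x).1)]
    congr 1
    funext x
    rw [tukey_eq_min_rpow p τ (h x) hτ,
      ENNReal.ofReal_rpow_of_nonneg (le_min (abs_nonneg _) hτ) hp0]
  set F : X → ℝ≥0∞ := fun x => ENNReal.ofReal (min |f x| τ) with hF
  set G : X → ℝ≥0∞ := fun x => ENNReal.ofReal (min |g x| τ) with hG
  have hFmeas : Measurable F := (hf.abs.min measurable_const).ennreal_ofReal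
  have hGmeas : Measurable G := (hg.abs.min measurable_const).ennreal_ofReal
  -- Minkowski
  have mink : (∫⁻ x, (ENNReal.ofReal (min |f x + g x| τ)) ^ p ∂μ) ^ (1 / p) ≤
      (∫⁻ x, F x ^ p ∂μ) ^ (1 / p) + (∫⁻ x, G x ^ p ∂μ) ^ (1 / p) := by
    refine le_trans ?_
      (ENNReal.lintegral_Lp_add_le hFmeas.aemeasurable hGmeas.aemeasurable hp)
    apply ENNReal.rpow_le_rpow _ (by positivity)
    apply lintegral_mono
    intro x
    apply ENNReal.rpow_le_rpow _ hp0
    rw [hF, hG]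
    calc ENNReal.ofReal (min |f x + g x| τ)
        ≤ ENNReal.ofReal (min |f x| τ + min |g x| τ) :=
          ENNReal.ofReal_le_ofReal (min_abs_add_le τ (f x) (g x) hτ)
      _ = _ := ENNReal.ofReal_add (le_min (abs_nonneg _) hτ) (le_min (abs_nonneg _) hτ)
  -- finiteness
  have fin : ∀ h : X → ℝ, (∫⁻ x, (ENNReal.ofReal (min |h x| τ)) ^ p ∂μ) ≠ ⊤ := by
    intro h
    have : (∫⁻ x, (ENNReal.ofReal (min |h x| τ)) ^ p ∂μ) ≤
        ∫⁻ _, ENNReal.ofReal τ ^ p ∂μ := by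
      apply lintegral_mono
      intro x
      exact ENNReal.rpow_le_rpow (ENNReal.ofReal_le_ofReal (min_le_right _ _)) hp0
    refine ne_top_of_le_ne_top ?_ this
    rw [lintegral_const]
    exact ENNReal.mul_ne_top (ENNReal.rpow_ne_top_of_nonneg hp0 ENNReal.ofReal_ne_top)
      (measure_ne_top μ _)
  -- nonnegativity of the integrals
  have nn : ∀ h : X → ℝ, 0 ≤ ∫ x, tukey p τ (h x) ∂μ := by
    intro h
    apply integral_nonneg
    intro x
    show (0:ℝ) ≤ tukey p τ (h x)
    rw [tukey_eq_min_rpow p τ (h x) hτ]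
    exact Real.rpow_nonneg (le_min (abs_nonneg _) hτ) p
  -- convert Minkowski back to reals
  rw [← main (fun x => f x + g x) (hf.add hg), ← main f hf, ← main g hg] at mink
  have := ENNReal.toReal_mono (by
      apply ENNReal.add_ne_top.2
      constructor <;> exact ENNReal.rpow_ne_top_of_nonneg (by positivity)
        ENNReal.ofReal_ne_top) mink
  rwa [ENNReal.toReal_add
      (ENNReal.rpow_ne_top_of_nonneg (by positivity) ENNReal.ofReal_ne_top)
      (ENNReal.rpow_ne_top_of_nonneg (by positivity) ENNReal.ofReal_ne_top),
    ← ENNReal.toReal_rpow, ← ENNReal.toReal_rpow, ← ENNReal.toReal_rpow,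
    ENNReal.toReal_ofReal (nn _), ENNReal.toReal_ofReal (nn f),
    ENNReal.toReal_ofReal (nn g)] at this
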